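/- Identification of the concurrent counterfactual mean under treatment k by only-concurrent outcome regression (treated-arm part of Theorem 1, statement 1): under assumptions (I-k), (C-k) and (P-k), one has 𝔼[Yᵏ | V=1] = Σ_{(w,e): 𝒫(W=w,E=e,V=1)>0} μ_oc(k,w,e) · p(w,e | V=1). -/

import Mathlib

open MeasureTheory Finset

/-- Conditional expectation given an event: `𝔼[X | B] := 𝔼[X · 1_B] / 𝒫(B)`. -/
noncomputable def condMean {Ω : Type*} [MeasurableSpace Ω] (P : Measure Ω)
    (X : Ω → ℝ) (B : Set Ω) : ℝ :=
  (∫ ω, B.indicator X ω ∂P) / (P B).toReal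

/-- Identification of the concurrent counterfactual mean under treatment `k` by
only-concurrent outcome regression (treated-arm part of Theorem 1, statement 1):
under weak A-ignorability (I-k), consistency (C-k) and positivity (P-k) among concurrent
units, `𝔼[Yᵏ | V=1] = Σ_{(w,e) : 𝒫(W=w,E=e,V=1)>0} μ_oc(k,w,e) · p(w,e | V=1)`. -/
theorem concurrent_mean_treated_identification_oc
    {Ω : Type*} [MeasurableSpace Ω] (P : Measure Ω) [IsProbabilityMeasure P]
    {𝓦 ℰ : Type*} [Fintype 𝓦] [Fintype ℰ] [Nonempty 𝓦] [Nonempty ℰ]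
    [MeasurableSpace 𝓦] [MeasurableSingletonClass 𝓦]
    [MeasurableSpace ℰ] [MeasurableSingletonClass ℰ]
    (W : Ω → 𝓦) (E : Ω → ℰ) (V : Ω → Fin 2) {K : ℕ} (A : Ω → Fin (K + 1))
    (k : Fin (K + 1)) (Y Yk Y0 : Ω → ℝ)
    (hW : Measurable W) (hE : Measurable E) (hV : Measurable V) (hA : Measurable A)
    (hY : Integrable Y P) (hYk : Integrable Yk P) (hY0 : Integrable Y0 P)
    (hV1 : 0 < P {ω | V ω = 1})
    -- (I-k) weak A-ignorability for arm k among concurrent units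
    (hIk : ∀ (w : 𝓦) (e : ℰ), 0 < P {ω | A ω = k ∧ W ω = w ∧ E ω = e ∧ V ω = 1} →
      condMean P Yk {ω | W ω = w ∧ E ω = e ∧ V ω = 1} =
        condMean P Yk {ω | A ω = k ∧ W ω = w ∧ E ω = e ∧ V ω = 1})
    -- (C-k) consistency in mean for arm k among concurrent units
    (hCk : ∀ (w : 𝓦) (e : ℰ), 0 < P {ω | A ω = k ∧ W ω = w ∧ E ω = e ∧ V ω = 1} →
      condMean P Yk {ω | A ω = k ∧ W ω = w ∧ E ω = e ∧ V ω = 1} =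
        condMean P Y {ω | A ω = k ∧ W ω = w ∧ E ω = e ∧ V ω = 1})
    -- (P-k) positivity for arm k among concurrent units
    (hPk : ∀ (w : 𝓦) (e : ℰ), 0 < P {ω | W ω = w ∧ E ω = e ∧ V ω = 1} →
      0 < P {ω | A ω = k ∧ W ω = w ∧ E ω = e ∧ V ω = 1}) :
    condMean P Yk {ω | V ω = 1} =
      ∑ w : 𝓦, ∑ e : ℰ,
        if 0 < P {ω | W ω = w ∧ E ω = e ∧ V ω = 1} then
          condMean P Y {ω | A ω = k ∧ W ω = w ∧ E ω = e ∧ V ω = 1} *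
            ((P {ω | W ω = w ∧ E ω = e ∧ V ω = 1}).toReal / (P {ω | V ω = 1}).toReal)
        else 0 := by

  classical
  have hmS : ∀ (w : 𝓦) (e : ℰ), MeasurableSet {ω | W ω = w ∧ E ω = e ∧ V ω = 1} := by
    intro w e
    have : {ω | W ω = w ∧ E ω = e ∧ V ω = 1}
        = W ⁻¹' {w} ∩ (E ⁻¹' {e} ∩ V ⁻¹' {1}) := by
      ext ω; simp only [Set.mem_setOf_eq, Set.mem_inter_iff, Set.mem_preimage,
        Set.mem_singleton_iff]
    rw [this]
    exact (hW (measurableSet_singleton w)).inter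
      ((hE (measurableSet_singleton e)).inter (hV (measurableSet_singleton 1)))
  have hpt : ∀ ω, ({ω | V ω = 1} : Set Ω).indicator Yk ω =
      ∑ w : 𝓦, ∑ e : ℰ, ({ω | W ω = w ∧ E ω = e ∧ V ω = 1} : Set Ω).indicator Yk ω := by
    intro ω
    by_cases hv : V ω = 1
    · simp [Set.indicator_apply, hv, ite_and, Finset.sum_ite_eq]
    · simp [Set.indicator_apply, hv]
  have hint : (∫ ω, ({ω | V ω = 1} : Set Ω).indicator Yk ω ∂P) =
      ∑ w : 𝓦, ∑ e : ℰ,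
        ∫ ω, ({ω | W ω = w ∧ E ω = e ∧ V ω = 1} : Set Ω).indicator Yk ω ∂P := by
    rw [integral_congr_ae (Filter.Eventually.of_forall hpt)]
    rw [integral_finset_sum]
    · refine Finset.sum_congr rfl fun w _ => ?_
      rw [integral_finset_sum]
      intro e _
      exact hYk.indicator (hmS w e)
    · intro w _
      exact integrable_finset_sum _ fun e _ => hYk.indicator (hmS w e)
  have hterm : ∀ (w : 𝓦) (e : ℰ),
      (∫ ω, ({ω | W ω = w ∧ E ω = e ∧ V ω = 1} : Set Ω).indicator Yk ω ∂P) =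
      (if 0 < P {ω | W ω = w ∧ E ω = e ∧ V ω = 1} then
        condMean P Y {ω | A ω = k ∧ W ω = w ∧ E ω = e ∧ V ω = 1} *
          (P {ω | W ω = w ∧ E ω = e ∧ V ω = 1}).toReal
      else 0) := by
    intro w e
    by_cases hpos : 0 < P {ω | W ω = w ∧ E ω = e ∧ V ω = 1}
    · rw [if_pos hpos]
      have hAk := hPk w e hpos
      have hch : condMean P Yk {ω | W ω = w ∧ E ω = e ∧ V ω = 1}
          = condMean P Y {ω | A ω = k ∧ W ω = w ∧ E ω = e ∧ V ω = 1} :=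
        (hIk w e hAk).trans (hCk w e hAk)
      have htr : 0 < (P {ω | W ω = w ∧ E ω = e ∧ V ω = 1}).toReal :=
        ENNReal.toReal_pos hpos.ne' (measure_ne_top P _)
      rw [← hch, condMean, div_mul_cancel₀]
      exact htr.ne'
    · rw [if_neg hpos]
      have h0 : P {ω | W ω = w ∧ E ω = e ∧ V ω = 1} = 0 := by
        by_contra h; exact hpos (lt_of_le_of_ne zero_le (Ne.symm h))
      rw [integral_indicator (hmS w e), Measure.restrict_eq_zero.mpr h0, integral_zero_measure]
  rw [condMean, hint, Finset.sum_div]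
  refine Finset.sum_congr rfl fun w _ => ?_
  rw [Finset.sum_div]
  refine Finset.sum_congr rfl fun e _ => ?_
  rw [hterm w e]
  by_cases hpos : 0 < P {ω | W ω = w ∧ E ω = e ∧ V ω = 1}
  · rw [if_pos hpos, if_pos hpos, mul_div_assoc]
  · rw [if_neg hpos, if_neg hpos, zero_div]
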